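/- Let J ⊆ ℝ be a nonempty open interval on which r·1 − b is invertible, and let v : ℝ → (Fin m → ℝ) be differentiable on J with v_i'(r) = −2·∑_s v_s(r)·ρ(r)_{s i} for all r ∈ J and all i. Then there exists a constant vector ψ : Fin m → ℝ such that v_i(r) = ∑_{l,k} ψ_l · ρ(r)_{l k} · ρ(r)_{k i} for all r ∈ J and all i. Equivalently, the row vector r ↦ v(r)·ρ(r)⁻¹·ρ(r)⁻¹ is constant on J. -/

import Mathlib

open Matrix

/-- **Integration of the Bianchi equation `DΨ_i = -2Ψ_s ρ_{si}`.**
With `ρ(r) = (r·1 - b)⁻¹` on a nonempty open interval `J` where `r·1 - b` is invertible,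
any vector solution of `v_i' = -2 ∑_s v_s ρ_{si}` has the form
`v_i(r) = ∑_{l,k} ψ_l ρ(r)_{lk} ρ(r)_{ki}` for a constant vector `ψ`. -/
theorem integrated_bianchi_Psi_i
    (m : ℕ) (hm : 1 ≤ m) (b : Matrix (Fin m) (Fin m) ℝ)
    (J : Set ℝ) (hJopen : IsOpen J) (hJconn : J.OrdConnected) (hJne : J.Nonempty)
    (hinv : ∀ r ∈ J, IsUnit (r • (1 : Matrix (Fin m) (Fin m) ℝ) - b))
    (v : ℝ → Fin m → ℝ)
    (hder : ∀ r ∈ J, ∀ i, HasDerivAt (fun t => v t i)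
      (-2 * ∑ s, v r s * (r • (1 : Matrix (Fin m) (Fin m) ℝ) - b)⁻¹ s i) r) :
    ∃ ψ : Fin m → ℝ, ∀ r ∈ J, ∀ i,
      v r i = ∑ l, ∑ k, ψ l * (r • (1 : Matrix (Fin m) (Fin m) ℝ) - b)⁻¹ l k
                * (r • (1 : Matrix (Fin m) (Fin m) ℝ) - b)⁻¹ k i := by
  set A : ℝ → Matrix (Fin m) (Fin m) ℝ := fun r => r • 1 - b with hA
  obtain ⟨r₀, hr₀⟩ := hJne
  -- entrywise derivative of A
  have hAent : ∀ (r : ℝ) (s t : Fin m),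
      HasDerivAt (fun u => A u s t) ((1 : Matrix (Fin m) (Fin m) ℝ) s t) r := by
    intro r s t
    have : (fun u => A u s t) = fun u => u * (1 : Matrix (Fin m) (Fin m) ℝ) s t - b s t := by
      funext u; simp [hA, Matrix.sub_apply, Matrix.smul_apply]
    rw [this]
    simpa using ((hasDerivAt_id r).mul_const ((1 : Matrix (Fin m) (Fin m) ℝ) s t)).sub_const
      (b s t)
  set w : ℝ → Fin m → ℝ := fun r => (v r) ᵥ* (A r * A r) with hw
  have hwder : ∀ r ∈ J, ∀ i, HasDerivAt (fun t => w t i) 0 r := by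
    intro r hr i
    have hAinv : (A r)⁻¹ * A r = 1 := Matrix.nonsing_inv_mul _
      ((Matrix.isUnit_iff_isUnit_det _).mp (hinv r hr))
    have hwform : (fun t => w t i)
        = fun t => ∑ s, ∑ k, v t s * A t s k * A t k i := by
      funext t
      simp [hw, Matrix.vecMul, Matrix.mul_apply, dotProduct, Finset.mul_sum, mul_assoc]
    rw [hwform]
    have key : ∀ s : Fin m, HasDerivAt (fun t => ∑ k, v t s * A t s k * A t k i)
        (∑ k, (((-2 * ∑ j, v r j * (A r)⁻¹ j s) * A r s k
            + v r s * (1 : Matrix (Fin m) (Fin m) ℝ) s k) * A r k i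
            + v r s * A r s k * (1 : Matrix (Fin m) (Fin m) ℝ) k i)) r := by
      intro s
      exact HasDerivAt.fun_sum fun k _ =>
        (((hder r hr s).mul (hAent r s k)).mul (hAent r k i))
    have total := HasDerivAt.fun_sum (fun s (_ : s ∈ Finset.univ) => key s)
    refine total.congr_deriv ?_
    -- algebra: the total derivative is zero
    have expand : ∀ s k, ((-2 * ∑ j, v r j * (A r)⁻¹ j s) * A r s k
            + v r s * (1 : Matrix (Fin m) (Fin m) ℝ) s k) * A r k i
            + v r s * A r s k * (1 : Matrix (Fin m) (Fin m) ℝ) k i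
        = (-2 * ∑ j, v r j * (A r)⁻¹ j s) * (A r s k * A r k i)
            + v r s * (1 : Matrix (Fin m) (Fin m) ℝ) s k * A r k i
            + v r s * A r s k * (1 : Matrix (Fin m) (Fin m) ℝ) k i := by
      intro s k; ring
    simp only [expand, Finset.sum_add_distrib]
    set u : Fin m → ℝ := fun s => ∑ j, v r j * (A r)⁻¹ j s with hu_def
    have hu : ∀ k, ∑ s, u s * A r s k = v r k := by
      intro k
      have h := congrFun (by rw [Matrix.vecMul_vecMul, hAinv, Matrix.vecMul_one] :
        (v r ᵥ* (A r)⁻¹) ᵥ* A r = v r) k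
      simpa [Matrix.vecMul, dotProduct, hu_def] using h
    have h1 : ∑ s, ∑ k, (-2 * u s) * (A r s k * A r k i)
        = -2 * ∑ k, v r k * A r k i := by
      rw [Finset.sum_comm, Finset.mul_sum]
      refine Finset.sum_congr rfl fun k _ => ?_
      have : ∑ s, (-2 * u s) * (A r s k * A r k i)
          = -2 * (∑ s, u s * A r s k) * A r k i := by
        rw [Finset.mul_sum, Finset.sum_mul]
        exact Finset.sum_congr rfl fun s _ => by ring
      rw [this, hu k]
      ring
    have h2 : ∑ s, ∑ k, v r s * (1 : Matrix (Fin m) (Fin m) ℝ) s k * A r k i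
        = ∑ k, v r k * A r k i := by
      simp [Matrix.one_apply, Finset.sum_ite_eq, mul_ite, ite_mul]
    have h3 : ∑ s, ∑ k, v r s * A r s k * (1 : Matrix (Fin m) (Fin m) ℝ) k i
        = ∑ s, v r s * A r s i := by
      simp [Matrix.one_apply, mul_ite, ite_mul]
    rw [h1, h2, h3]
    ring
  -- w is constant on J
  have hconst : ∀ r ∈ J, w r = w r₀ := by
    intro r hr
    funext i
    have hconv : Convex ℝ J := convex_iff_ordConnected.mpr hJconn
    refine hconv.is_const_of_fderivWithin_eq_zero (𝕜 := ℝ) (f := fun t => w t i) ?_ ?_ hr hr₀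
    · intro x hx
      exact ((hwder x hx i).differentiableAt).differentiableWithinAt
    · intro x hx
      rw [fderivWithin_eq_fderiv (hJopen.uniqueDiffWithinAt hx)
        ((hwder x hx i).differentiableAt)]
      have := (hwder x hx i).hasFDerivAt.fderiv
      rw [this]
      ext y
      simp
  refine ⟨w r₀, ?_⟩
  intro r hr i
  have hunit := (Matrix.isUnit_iff_isUnit_det _).mp (hinv r hr)
  have hAinv : A r * (A r)⁻¹ = 1 := Matrix.mul_nonsing_inv _ hunit
  have hv : v r = (w r) ᵥ* ((A r)⁻¹ * (A r)⁻¹) := by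
    rw [hw]
    simp only [Matrix.vecMul_vecMul]
    rw [Matrix.mul_assoc, ← Matrix.mul_assoc (A r) ((A r)⁻¹) ((A r)⁻¹), hAinv,
      Matrix.one_mul, hAinv, Matrix.vecMul_one]
  rw [← hconst r hr]
  have : v r i = ((w r) ᵥ* ((A r)⁻¹ * (A r)⁻¹)) i := by rw [← hv]
  rw [this]
  simp [hA, Matrix.vecMul, Matrix.mul_apply, dotProduct, Finset.mul_sum, mul_assoc]
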